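/- Let F_{3,3} : ℝ^6 → ℝ^6 be given by F_{3,3}(x,y,u1,u2,u3,u4) = (x³+y³+u1·x+u2·y+u3·x²+u4·y², x·y, u1, u2, u3, u4). Then for every point q = (x,y,u1,u2,u3,u4) ∈ ℝ^6, the derivative of F_{3,3} at q applied to ξ_3(q) = (−(1/3)x²−(1/9)u3·x, (1/3)xy, x³+y³+u1·x+u2·y+u3·x²+u4·y²+(1/9)u1·u3, −(5/3)u4·xy, −(2/3)u1+(2/9)u3², −2xy) equals η_3(F_{3,3}(q)), where η_3(X,Y,U1,U2,U3,U4) = ((4/3)U2·Y, −(1/9)U3·Y, X+(1/9)U1·U3, −(5/3)U4·Y, −(2/3)U1+(2/9)U3², −2Y). In particular η_3 is liftable over F_{3,3}. -/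

import Mathlib

/-- The stable map `F₃₃` of discrete algebra type `B_{3,3}`. -/
noncomputable def F33 : ℝ × ℝ × ℝ × ℝ × ℝ × ℝ → ℝ × ℝ × ℝ × ℝ × ℝ × ℝ :=
  fun (x, y, u1, u2, u3, u4) =>
    (x^3 + y^3 + u1*x + u2*y + u3*x^2 + u4*y^2, x*y, u1, u2, u3, u4)

/-- The vector field `η₃` on the target of `F₃₃`. -/
noncomputable def eta3 : ℝ × ℝ × ℝ × ℝ × ℝ × ℝ → ℝ × ℝ × ℝ × ℝ × ℝ × ℝ :=
  fun (X, Y, U1, U2, U3, U4) =>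
    ((4/3)*U2*Y, -(1/9)*U3*Y, X + (1/9)*U1*U3, -(5/3)*U4*Y,
     -(2/3)*U1 + (2/9)*U3^2, -2*Y)

/-- The lowerable vector field `ξ₃` on the source of `F₃₃`. -/
noncomputable def xi3 : ℝ × ℝ × ℝ × ℝ × ℝ × ℝ → ℝ × ℝ × ℝ × ℝ × ℝ × ℝ :=
  fun (x, y, u1, u2, u3, u4) =>
    (-(1/3)*x^2 - (1/9)*u3*x, (1/3)*x*y,
     x^3 + y^3 + u1*x + u2*y + u3*x^2 + u4*y^2 + (1/9)*u1*u3,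
     -(5/3)*u4*x*y, -(2/3)*u1 + (2/9)*u3^2, -2*x*y)

/-- The source/target space `ℝ⁶` as an iterated product. -/
abbrev E6 : Type := ℝ × ℝ × ℝ × ℝ × ℝ × ℝ

/-- Coordinate projections of `E6` as continuous linear maps. -/
noncomputable def P1 : E6 →L[ℝ] ℝ := ContinuousLinearMap.fst ℝ ℝ _
noncomputable def P2 : E6 →L[ℝ] ℝ := (ContinuousLinearMap.fst ℝ ℝ _).comp (ContinuousLinearMap.snd ℝ ℝ _)
noncomputable def P3 : E6 →L[ℝ] ℝ := ((ContinuousLinearMap.fst ℝ ℝ _).comp (ContinuousLinearMap.snd ℝ ℝ _)).comp (ContinuousLinearMap.snd ℝ ℝ _)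
noncomputable def P4 : E6 →L[ℝ] ℝ := (((ContinuousLinearMap.fst ℝ ℝ _).comp (ContinuousLinearMap.snd ℝ ℝ _)).comp (ContinuousLinearMap.snd ℝ ℝ _)).comp (ContinuousLinearMap.snd ℝ ℝ _)
noncomputable def P5 : E6 →L[ℝ] ℝ := ((((ContinuousLinearMap.fst ℝ ℝ _).comp (ContinuousLinearMap.snd ℝ ℝ _)).comp (ContinuousLinearMap.snd ℝ ℝ _)).comp (ContinuousLinearMap.snd ℝ ℝ _)).comp (ContinuousLinearMap.snd ℝ ℝ _)
noncomputable def P6 : E6 →L[ℝ] ℝ := ((((ContinuousLinearMap.snd ℝ ℝ ℝ).comp (ContinuousLinearMap.snd ℝ ℝ _)).comp (ContinuousLinearMap.snd ℝ ℝ _)).comp (ContinuousLinearMap.snd ℝ ℝ _)).comp (ContinuousLinearMap.snd ℝ ℝ _)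

/-- `η₃` is liftable over `F₃₃` via `ξ₃`:
for every `q`, `d(F₃₃)_q (ξ₃ q) = η₃ (F₃₃ q)`. -/
theorem eta3_liftable_over_F33 :
    ∀ q : ℝ × ℝ × ℝ × ℝ × ℝ × ℝ, fderiv ℝ F33 q (xi3 q) = eta3 (F33 q) := by
  have hF : F33 = fun q : E6 =>
      (P1 q * P1 q * P1 q + P2 q * P2 q * P2 q + P3 q * P1 q + P4 q * P2 q
          + P5 q * (P1 q * P1 q) + P6 q * (P2 q * P2 q),
        P1 q * P2 q, P3 q, P4 q, P5 q, P6 q) := by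
    funext ⟨x, y, u1, u2, u3, u4⟩
    simp only [P1, P2, P3, P4, P5, P6, ContinuousLinearMap.coe_comp', Function.comp_apply,
      ContinuousLinearMap.coe_fst', ContinuousLinearMap.coe_snd', F33]
    ring_nf
  rintro ⟨x, y, u1, u2, u3, u4⟩
  set q : E6 := (x, y, u1, u2, u3, u4) with hq
  have h1 := P1.hasFDerivAt (x := q)
  have h2 := P2.hasFDerivAt (x := q)
  have h3 := P3.hasFDerivAt (x := q)
  have h4 := P4.hasFDerivAt (x := q)
  have h5 := P5.hasFDerivAt (x := q)
  have h6 := P6.hasFDerivAt (x := q)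
  have H := (HasFDerivAt.prodMk (((((((h1.mul h1).mul h1).add ((h2.mul h2).mul h2)).add (h3.mul h1)).add
      (h4.mul h2)).add (h5.mul (h1.mul h1))).add (h6.mul (h2.mul h2)))
      ((h1.mul h2).prodMk (h3.prodMk (h4.prodMk (h5.prodMk h6)))))
  erw [hF, H.fderiv]
  simp only [ContinuousLinearMap.prod_apply, ContinuousLinearMap.add_apply,
    ContinuousLinearMap.coe_smul', Pi.smul_apply, smul_eq_mul,
    P1, P2, P3, P4, P5, P6, ContinuousLinearMap.coe_comp', Function.comp_apply,
    ContinuousLinearMap.coe_fst', ContinuousLinearMap.coe_snd', xi3, eta3, hq]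
  refine Prod.ext ?_ (Prod.ext ?_ (Prod.ext ?_ (Prod.ext ?_ (Prod.ext ?_ ?_)))) <;>
    simp <;> ring
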